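/- For integers ν, ℓ ≥ 1, a real number w, and positive integers ν ≤ k ≤ ν + ℓ − 1, the following inequality holds: the sum over k from ν to ν+ℓ−1 of log(1 + (w/k)²) is at least w² · ∫_ν^{ν+ℓ} dx/(w² + x²). -/

import Mathlib

open intervalIntegral

lemma integrable_aux (w : ℝ) (a b : ℝ) (ha : 0 < a) (hab : a ≤ b) :
    IntervalIntegrable (fun x => 1 / (w ^ 2 + x ^ 2)) MeasureTheory.volume a b := by
  apply ContinuousOn.intervalIntegrable
  apply ContinuousOn.div continuousOn_const (by fun_prop)
  intro x hx
  rw [Set.uIcc_of_le hab] at hx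
  have : 0 < x := lt_of_lt_of_le ha hx.1
  positivity

lemma per_interval (w : ℝ) (k : ℕ) (hk : 1 ≤ k) :
    w ^ 2 * ∫ x in (k : ℝ)..((k : ℝ) + 1), 1 / (w ^ 2 + x ^ 2) ≤
      Real.log (1 + (w / k) ^ 2) := by
  have hk0 : (0 : ℝ) < k := by exact_mod_cast hk
  have hkp : (0 : ℝ) < w ^ 2 + (k : ℝ) ^ 2 := by positivity
  have h1 : ∫ x in (k : ℝ)..((k : ℝ) + 1), 1 / (w ^ 2 + x ^ 2) ≤
      1 / (w ^ 2 + (k : ℝ) ^ 2) := by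
    have := intervalIntegral.integral_mono_on (a := (k : ℝ)) (b := (k : ℝ) + 1)
      (f := fun x => 1 / (w ^ 2 + x ^ 2)) (g := fun _ => 1 / (w ^ 2 + (k : ℝ) ^ 2))
      (by linarith) (integrable_aux w _ _ hk0 (by linarith)) intervalIntegrable_const
      (fun x hx => by
        have hx1 : (k : ℝ) ≤ x := hx.1
        have : (k : ℝ) ^ 2 ≤ x ^ 2 := by nlinarith
        apply one_div_le_one_div_of_le hkp
        linarith)
    simpa using this
  have h2 : w ^ 2 / (w ^ 2 + (k : ℝ) ^ 2) ≤ Real.log (1 + (w / k) ^ 2) := by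
    have hx : (0 : ℝ) < (k : ℝ) ^ 2 / (w ^ 2 + (k : ℝ) ^ 2) := by positivity
    have hlog := Real.log_le_sub_one_of_pos hx
    have heq : (1 : ℝ) + (w / k) ^ 2 = ((k : ℝ) ^ 2 / (w ^ 2 + (k : ℝ) ^ 2))⁻¹ := by
      field_simp
      ring
    rw [heq, Real.log_inv]
    have : (k : ℝ) ^ 2 / (w ^ 2 + (k : ℝ) ^ 2) - 1 = -(w ^ 2 / (w ^ 2 + (k : ℝ) ^ 2)) := by
      field_simp
      ring
    linarith [hlog, this.symm ▸ hlog]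
  calc w ^ 2 * ∫ x in (k : ℝ)..((k : ℝ) + 1), 1 / (w ^ 2 + x ^ 2)
      ≤ w ^ 2 * (1 / (w ^ 2 + (k : ℝ) ^ 2)) := by
        apply mul_le_mul_of_nonneg_left h1 (by positivity)
    _ = w ^ 2 / (w ^ 2 + (k : ℝ) ^ 2) := by ring
    _ ≤ _ := h2

theorem sum_log_ge_integral (ν ℓ : ℕ) (hν : 1 ≤ ν) (hℓ : 1 ≤ ℓ) (w : ℝ) :
    w ^ 2 * ∫ x in (ν : ℝ)..((ν : ℝ) + ℓ), 1 / (w ^ 2 + x ^ 2) ≤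
      ∑ k ∈ Finset.Ico ν (ν + ℓ), Real.log (1 + (w / k) ^ 2) := by
  have hν0 : (0 : ℝ) < ν := by exact_mod_cast hν
  have hsplit : ∫ x in (ν : ℝ)..((ν : ℝ) + ℓ), 1 / (w ^ 2 + x ^ 2) =
      ∑ i ∈ Finset.range ℓ, ∫ x in ((ν : ℝ) + i)..((ν : ℝ) + i + 1), 1 / (w ^ 2 + x ^ 2) := by
    have := intervalIntegral.sum_integral_adjacent_intervals
      (a := fun i : ℕ => (ν : ℝ) + i) (n := ℓ)
      (f := fun x => 1 / (w ^ 2 + x ^ 2))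
      (fun i _ => by
        push_cast
        exact integrable_aux w _ _ (by positivity) (by linarith))
    simp only [Nat.cast_zero, add_zero] at this
    rw [← this]
    push_cast
    simp [add_assoc]
  rw [hsplit, Finset.mul_sum, Finset.sum_Ico_eq_sum_range, Nat.add_sub_cancel_left]
  apply Finset.sum_le_sum
  intro i _
  have := per_interval w (ν + i) (le_trans hν (Nat.le_add_right _ _))
  push_cast at this ⊢
  linarith
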